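/- Let N > 2 be an integer, p > 1, and k < 0 with (1-p)·k + p - N > 0. Let 0 < b ≤ π and suppose U : [0, b) → ℝ is differentiable on [0, b) with continuous derivative, U(0) = 0, and U satisfies the U-equation on (0, b). Then U'(0) = ((1-p)·k + p - N)/(N-1) > 0 and U'(x) > 0 for all x ∈ [0, b). -/

import Mathlib

noncomputable section
open Real Set Filter Topology

/-- `U` satisfies the U-equation (for parameters `p`, `N`, `k`) on the set `I`:
`((p-1)U² + 1)U' = k(1-p)(U² + 1)² + (U² + 1)(p - N + (2-N)·U·cot x)`. -/
def UEqOn (p : ℝ) (N : ℕ) (k : ℝ) (U : ℝ → ℝ) (I : Set ℝ) : Prop :=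
  ∀ x ∈ I,
    ((p - 1) * (U x) ^ 2 + 1) * deriv U x =
      k * (1 - p) * ((U x) ^ 2 + 1) ^ 2
        + ((U x) ^ 2 + 1) * (p - (N : ℝ) + (2 - (N : ℝ)) * U x * Real.cot x)

lemma hasDerivAt_cot' {x : ℝ} (h : Real.sin x ≠ 0) :
    HasDerivAt Real.cot (-(1 / Real.sin x ^ 2)) x := by
  have hc : Real.cot = fun y => Real.cos y / Real.sin y :=
    funext fun y => Real.cot_eq_cos_div_sin y
  rw [hc]
  have := (Real.hasDerivAt_cos x).div (Real.hasDerivAt_sin x) h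
  refine this.congr_deriv ?_
  field_simp
  nlinarith [Real.sin_sq_add_cos_sq x]

/-- A solution of the U-equation with `U(0) = 0` is strictly increasing:
`U'(0) = ((1-p)k + p - N)/(N-1) > 0` and `U' > 0` on `[0,b)`. -/
theorem U_increasing (N : ℕ) (hN : 2 < N) (p : ℝ) (hp : 1 < p) (k : ℝ) (hk : k < 0)
    (hkp : 0 < (1 - p) * k + p - (N : ℝ))
    (b : ℝ) (hb0 : 0 < b) (hb : b ≤ π)
    (U : ℝ → ℝ)
    (hd : ∀ x ∈ Ico (0 : ℝ) b, DifferentiableWithinAt ℝ U (Ici 0) x)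
    (hdc : ContinuousOn (derivWithin U (Ici 0)) (Ico 0 b))
    (hU0 : U 0 = 0)
    (heq : UEqOn p N k U (Ioo 0 b)) :
    derivWithin U (Ici 0) 0 = ((1 - p) * k + p - (N : ℝ)) / ((N : ℝ) - 1) ∧
    0 < ((1 - p) * k + p - (N : ℝ)) / ((N : ℝ) - 1) ∧
    ∀ x ∈ Ico (0 : ℝ) b, 0 < derivWithin U (Ici 0) x := by
  set φ : ℝ → ℝ := derivWithin U (Ici 0) with hφdef
  have hN2 : (2 : ℝ) < (N : ℝ) := by exact_mod_cast hN
  have hN1 : (1 : ℝ) < (N : ℝ) := by linarith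
  set A : ℝ := ((1 - p) * k + p - (N : ℝ)) / ((N : ℝ) - 1) with hAdef
  have hA : 0 < A := div_pos hkp (by linarith)
  -- the denominator of the equation is positive
  have hden : ∀ x : ℝ, 0 < (p - 1) * (U x) ^ 2 + 1 := fun x => by nlinarith [sq_nonneg (U x)]
  have hsq : ∀ x : ℝ, 0 < (U x) ^ 2 + 1 := fun x => by positivity
  -- `deriv U x = φ x` for `x > 0`
  have hφeq : ∀ x : ℝ, 0 < x → φ x = deriv U x := fun x hx =>
    derivWithin_of_mem_nhds (Ici_mem_nhds hx)
  -- Step 1: the value of φ 0.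
  have h0mem : (0 : ℝ) ∈ Ico (0 : ℝ) b := ⟨le_refl _, hb0⟩
  -- slope limit
  have hslope : Tendsto (fun x => U x / x) (𝓝[>] (0 : ℝ)) (𝓝 (φ 0)) := by
    have h0 := (hd 0 h0mem).hasDerivWithinAt
    rw [hasDerivWithinAt_iff_tendsto_slope] at h0
    have hs : Ici (0 : ℝ) \ {0} = Ioi 0 := Ici_sdiff_left
    rw [hs] at h0
    refine h0.congr fun x => ?_
    simp [slope_def_field, hU0, div_eq_div_iff]
  have hUlim : Tendsto U (𝓝[>] (0 : ℝ)) (𝓝 0) := by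
    have := (hd 0 h0mem).continuousWithinAt
    have h2 : Tendsto U (𝓝[Ici (0:ℝ)] 0) (𝓝 0) := by
      simpa [hU0] using this.tendsto
    exact h2.mono_left (nhdsWithin_mono _ Ioi_subset_Ici_self)
  have hsinx : Tendsto (fun x : ℝ => Real.sin x / x) (𝓝[>] (0 : ℝ)) (𝓝 1) := by
    have h0 := Real.hasDerivAt_sin 0
    rw [hasDerivAt_iff_tendsto_slope] at h0
    have h1 : Tendsto (slope Real.sin 0) (𝓝[>] (0:ℝ)) (𝓝 (Real.cos 0)) :=
      h0.mono_left (nhdsWithin_mono _ fun x hx => ne_of_gt hx)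
    rw [Real.cos_zero] at h1
    refine h1.congr fun x => ?_
    simp [slope_def_field]
  have hxcot : Tendsto (fun x : ℝ => x * Real.cot x) (𝓝[>] (0 : ℝ)) (𝓝 1) := by
    have hinv : Tendsto (fun x : ℝ => x / Real.sin x) (𝓝[>] (0 : ℝ)) (𝓝 1) := by
      have := hsinx.inv₀ (by norm_num)
      simpa using this
    have hcos : Tendsto (fun x : ℝ => Real.cos x) (𝓝[>] (0 : ℝ)) (𝓝 1) := by
      have := (Real.continuous_cos.tendsto 0).mono_left (nhdsWithin_le_nhds (s := Ioi (0:ℝ)))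
      simpa using this
    have := hinv.mul hcos
    rw [one_mul] at this
    refine this.congr fun x => ?_
    rw [Real.cot_eq_cos_div_sin]
    ring
  have hUcot : Tendsto (fun x : ℝ => U x * Real.cot x) (𝓝[>] (0 : ℝ)) (𝓝 (φ 0)) := by
    have := hslope.mul hxcot
    rw [mul_one] at this
    refine this.congr' ?_
    filter_upwards [self_mem_nhdsWithin] with x (hx : 0 < x)
    field_simp
  set L : ℝ := k * (1 - p) * ((0:ℝ) ^ 2 + 1) ^ 2 +
      ((0:ℝ) ^ 2 + 1) * (p - (N : ℝ) + (2 - (N : ℝ)) * φ 0) with hLdef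
  have hnum : Tendsto
      (fun x => k * (1 - p) * ((U x) ^ 2 + 1) ^ 2
        + ((U x) ^ 2 + 1) * (p - (N : ℝ) + (2 - (N : ℝ)) * (U x * Real.cot x)))
      (𝓝[>] (0 : ℝ)) (𝓝 L) := by
    have h1 : Tendsto (fun x => (U x) ^ 2 + 1) (𝓝[>] (0:ℝ)) (𝓝 ((0:ℝ)^2 + 1)) :=
      ((hUlim.pow 2).add tendsto_const_nhds)
    exact (tendsto_const_nhds.mul (h1.pow 2)).add
      (h1.mul (tendsto_const_nhds.add (tendsto_const_nhds.mul hUcot)))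
  have hdenl : Tendsto (fun x => (p - 1) * (U x) ^ 2 + 1) (𝓝[>] (0:ℝ))
      (𝓝 ((p-1) * (0:ℝ)^2 + 1)) :=
    (tendsto_const_nhds.mul (hUlim.pow 2)).add tendsto_const_nhds
  have hFlim : Tendsto (fun x =>
      (k * (1 - p) * ((U x) ^ 2 + 1) ^ 2
        + ((U x) ^ 2 + 1) * (p - (N : ℝ) + (2 - (N : ℝ)) * (U x * Real.cot x)))
      / ((p - 1) * (U x) ^ 2 + 1)) (𝓝[>] (0:ℝ)) (𝓝 L) := by
    have := hnum.div hdenl (by norm_num)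
    simpa [Pi.div_def] using this
  -- identify φ with the formula on (0, b)
  have hφform : ∀ x ∈ Ioo (0:ℝ) b, φ x =
      (k * (1 - p) * ((U x) ^ 2 + 1) ^ 2
        + ((U x) ^ 2 + 1) * (p - (N : ℝ) + (2 - (N : ℝ)) * (U x * Real.cot x)))
      / ((p - 1) * (U x) ^ 2 + 1) := by
    intro x hx
    rw [hφeq x hx.1, eq_div_iff (ne_of_gt (hden x)), mul_comm]
    have := heq x hx
    linarith [this]
  haveI hNB : (𝓝[Ioo (0:ℝ) b] (0:ℝ)).NeBot := by
    refine mem_closure_iff_nhdsWithin_neBot.mp ?_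
    rw [closure_Ioo (ne_of_lt hb0)]
    exact ⟨le_refl _, le_of_lt hb0⟩
  have hφlim : Tendsto φ (𝓝[Ioo (0:ℝ) b] (0:ℝ)) (𝓝 L) := by
    refine (hFlim.mono_left (nhdsWithin_mono _ fun x hx => hx.1)).congr' ?_
    filter_upwards [self_mem_nhdsWithin] with x hx
    exact (hφform x hx).symm
  have hφcont : Tendsto φ (𝓝[Ioo (0:ℝ) b] (0:ℝ)) (𝓝 (φ 0)) :=
    ((hdc 0 h0mem).mono_left (nhdsWithin_mono _ Ioo_subset_Ico_self))
  have hφ0L : φ 0 = L := tendsto_nhds_unique hφcont hφlim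
  have hφ0 : φ 0 = A := by
    have h1 : ((N : ℝ) - 1) * φ 0 = (1 - p) * k + p - (N : ℝ) := by
      rw [hLdef] at hφ0L; nlinarith [hφ0L]
    rw [hAdef, eq_div_iff (by linarith : (N:ℝ) - 1 ≠ 0)]
    linarith [h1]
  refine ⟨hφ0, hA, ?_⟩
  -- Step 2: positivity of φ on [0, b)
  by_contra hcon
  push_neg at hcon
  obtain ⟨y, hy, hyle⟩ := hcon
  -- first point where φ ≤ 0
  set S : Set ℝ := {x ∈ Icc (0:ℝ) y | φ x ≤ 0} with hSdef
  have hIccsub : Icc (0:ℝ) y ⊆ Ico 0 b := fun x hx => ⟨hx.1, lt_of_le_of_lt hx.2 hy.2⟩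
  have hSclosed : IsClosed S := by
    have : S = Icc (0:ℝ) y ∩ φ ⁻¹' (Iic 0) := by
      ext x
      simp only [hSdef, Set.mem_setOf_eq, Set.mem_inter_iff, Set.mem_preimage, Set.mem_Iic]
    rw [this]
    exact ContinuousOn.preimage_isClosed_of_isClosed (hdc.mono hIccsub) isClosed_Icc isClosed_Iic
  have hSne : S.Nonempty := ⟨y, ⟨hy.1, le_refl _⟩, hyle⟩
  have hSbdd : BddBelow S := ⟨0, fun x hx => hx.1.1⟩
  set x0 : ℝ := sInf S with hx0def
  have hx0S : x0 ∈ S := hSclosed.csInf_mem hSne hSbdd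
  have hx0y : x0 ∈ Icc (0:ℝ) y := hx0S.1
  have hφx0 : φ x0 ≤ 0 := hx0S.2
  have hx0b : x0 < b := lt_of_le_of_lt hx0y.2 hy.2
  have hx0pos : 0 < x0 := by
    rcases lt_or_eq_of_le hx0y.1 with h | h
    · exact h
    · exfalso; rw [← h] at hφx0; rw [hφ0] at hφx0; linarith
  -- φ > 0 on [0, x0)
  have hφpos : ∀ x ∈ Ico (0:ℝ) x0, 0 < φ x := by
    intro x hx
    by_contra hle
    push_neg at hle
    have hxS : x ∈ S := ⟨⟨hx.1, le_trans (le_of_lt hx.2) hx0y.2⟩, hle⟩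
    exact absurd (csInf_le hSbdd hxS) (not_le.mpr hx.2)
  -- φ x0 = 0 by continuity from the left
  haveI hNB2 : (𝓝[Ico (0:ℝ) x0] x0).NeBot := by
    refine mem_closure_iff_nhdsWithin_neBot.mp ?_
    rw [closure_Ico (ne_of_lt hx0pos)]
    exact ⟨le_of_lt hx0pos, le_refl _⟩
  have hφx0' : 0 ≤ φ x0 := by
    have hten : Tendsto φ (𝓝[Ico (0:ℝ) x0] x0) (𝓝 (φ x0)) := by
      refine ((hdc x0 ⟨le_of_lt hx0pos, hx0b⟩).mono_left (nhdsWithin_mono _ ?_))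
      exact fun z hz => ⟨hz.1, lt_trans hz.2 hx0b⟩
    refine ge_of_tendsto hten ?_
    filter_upwards [self_mem_nhdsWithin] with z hz
    exact le_of_lt (hφpos z hz)
  have hφx00 : φ x0 = 0 := le_antisymm hφx0 hφx0'
  -- U is strictly increasing on [0, x0], thus U x0 > 0
  have hUx0pos : 0 < U x0 := by
    have hmono : StrictMonoOn U (Icc 0 x0) := by
      refine strictMonoOn_of_deriv_pos (convex_Icc 0 x0) ?_ ?_
      · intro z hz
        exact ((hd z ⟨hz.1, lt_of_le_of_lt hz.2 hx0b⟩).continuousWithinAt).mono Icc_subset_Ici_self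
      · intro z hz
        rw [interior_Icc] at hz
        rw [← hφeq z hz.1]
        exact hφpos z ⟨le_of_lt hz.1, hz.2⟩
    have := hmono (left_mem_Icc.mpr (le_of_lt hx0pos)) (right_mem_Icc.mpr (le_of_lt hx0pos)) hx0pos
    rw [hU0] at this; exact this
  -- the auxiliary function h
  set g : ℝ → ℝ := fun x =>
    ((N : ℝ) - 2) * U x * Real.cot x - k * (1 - p) * ((U x) ^ 2 + 1) - (p - (N : ℝ)) with hgdef
  have hgeq : ∀ x ∈ Ioo (0:ℝ) b,
      ((p - 1) * (U x) ^ 2 + 1) * deriv U x = -(((U x) ^ 2 + 1) * g x) := by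
    intro x hx
    have := heq x hx
    rw [this, hgdef]; ring
  have hgx0 : g x0 = 0 := by
    have h1 := hgeq x0 ⟨hx0pos, hx0b⟩
    rw [← hφeq x0 hx0pos, hφx00, mul_zero] at h1
    have h3 : ((U x0) ^ 2 + 1) * g x0 = 0 := by linarith [h1]
    rcases mul_eq_zero.mp h3 with h4 | h4
    · exact absurd h4 (ne_of_gt (hsq x0))
    · exact h4
  have hgneg : ∀ x ∈ Ioo (0:ℝ) x0, g x < 0 := by
    intro x hx
    have h1 := hgeq x ⟨hx.1, lt_trans hx.2 hx0b⟩
    rw [← hφeq x hx.1] at h1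
    have h2 : 0 < φ x := hφpos x ⟨le_of_lt hx.1, hx.2⟩
    have h3 : 0 < ((p - 1) * (U x) ^ 2 + 1) * φ x := mul_pos (hden x) h2
    rw [h1] at h3
    have h4 : ((U x) ^ 2 + 1) * g x < 0 := by linarith
    by_contra hge
    push_neg at hge
    exact absurd h4 (not_lt.mpr (mul_nonneg (le_of_lt (hsq x)) hge))
  -- derivative of g at x0
  have hsin0 : Real.sin x0 ≠ 0 := by
    refine ne_of_gt (Real.sin_pos_of_pos_of_lt_pi hx0pos ?_)
    exact lt_of_lt_of_le hx0b hb
  have hUder : HasDerivAt U 0 x0 := by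
    have h1 : DifferentiableAt ℝ U x0 :=
      (hd x0 ⟨le_of_lt hx0pos, hx0b⟩).differentiableAt (Ici_mem_nhds hx0pos)
    have h2 : deriv U x0 = 0 := by rw [← hφeq x0 hx0pos]; exact hφx00
    rw [← h2]
    exact h1.hasDerivAt
  have hcotder : HasDerivAt Real.cot (-(1 / Real.sin x0 ^ 2)) x0 := hasDerivAt_cot' hsin0
  set c : ℝ := ((N : ℝ) - 2) * (0 * Real.cot x0 + U x0 * (-(1 / Real.sin x0 ^ 2))) -
      k * (1 - p) * (2 * U x0 * 0 + 0) - 0 with hcdef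
  have hgder : HasDerivAt g c x0 := by
    have h1 : HasDerivAt (fun x => ((N : ℝ) - 2) * U x * Real.cot x)
        (((N : ℝ) - 2) * (0 * Real.cot x0 + U x0 * (-(1 / Real.sin x0 ^ 2)))) x0 := by
      have := (hUder.mul hcotder).const_mul ((N : ℝ) - 2)
      refine (this.congr_deriv (by ring)).congr_of_eventuallyEq (Filter.Eventually.of_forall fun z => ?_)
      simp only [Pi.mul_apply]; ring
    have h2 : HasDerivAt (fun x => k * (1 - p) * ((U x) ^ 2 + 1))
        (k * (1 - p) * (2 * U x0 * 0 + 0)) x0 := by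
      have hsqder : HasDerivAt (fun x => (U x) ^ 2 + 1) (2 * U x0 * 0 + 0) x0 := by
        have := (hUder.pow 2).add_const 1
        exact this.congr_deriv (by simp)
      exact hsqder.const_mul _
    have h3 := (h1.sub h2).sub_const (p - (N : ℝ))
    have hc3 : c = ((N : ℝ) - 2) * (0 * Real.cot x0 + U x0 * -(1 / Real.sin x0 ^ 2)) -
        k * (1 - p) * (2 * U x0 * 0 + 0) := by rw [hcdef]; ring
    rw [hc3]
    exact h3
  have hcneg : c < 0 := by
    have hc2 : c = -((((N : ℝ) - 2) * U x0) * (1 / Real.sin x0 ^ 2)) := by rw [hcdef]; ring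
    have h1 : 0 < 1 / Real.sin x0 ^ 2 := by positivity
    have h2 : 0 < (N : ℝ) - 2 := by linarith
    rw [hc2, neg_lt_zero]
    exact mul_pos (mul_pos h2 hUx0pos) h1
  -- but c ≥ 0 since g < 0 left of x0 and g x0 = 0 : contradiction
  have hcge : 0 ≤ c := by
    rw [hasDerivAt_iff_tendsto_slope] at hgder
    haveI hNB3 : (𝓝[Ioo (0:ℝ) x0] x0).NeBot := by
      refine mem_closure_iff_nhdsWithin_neBot.mp ?_
      rw [closure_Ioo (ne_of_lt hx0pos)]
      exact ⟨le_of_lt hx0pos, le_refl _⟩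
    have hten : Tendsto (slope g x0) (𝓝[Ioo (0:ℝ) x0] x0) (𝓝 c) :=
      hgder.mono_left (nhdsWithin_mono _ fun z hz => ne_of_lt hz.2)
    refine ge_of_tendsto hten ?_
    filter_upwards [self_mem_nhdsWithin] with z hz
    have h1 : g z < 0 := hgneg z hz
    have h2 : z - x0 < 0 := by linarith [hz.2]
    rw [slope_def_field]
    rw [hgx0]
    have : g z - 0 = g z := by ring
    rw [this]
    exact le_of_lt (div_pos_of_neg_of_neg h1 h2)
  linarith
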